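/- For every x ∈ E_{M,θ}(α) and every k ≥ N_0, the inserted digits are monotone: ℓ_{n_{k+1}}(x) ≥ ℓ_{n_k}(x). Consequently L_{n,θ}(x) = ℓ_{n_k}(x) for all n with n_k ≤ n < n_{k+1} and k ≥ N_0 sufficiently large. -/

import Mathlib

open Filter Real

noncomputable section

/-- The generalized Gauss map `T_θ`. -/
def gaussMap (θ : ℝ) (x : ℝ) : ℝ := if x = 0 then 0 else 1 / x - θ * ⌊1 / (θ * x)⌋

/-- The `n`-th digit (1-indexed) of the θ-expansion of `x`: `ℓ_n(x) = ⌊1/(θ·T_θ^{n−1}(x))⌋`. -/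
def digit (θ : ℝ) (x : ℝ) (n : ℕ) : ℤ := ⌊1 / (θ * (gaussMap θ)^[n - 1] x)⌋

/-- `S_{n,θ}(x)`, the sum of the first `n` digits. -/
def Sdig (θ : ℝ) (x : ℝ) (n : ℕ) : ℤ := ∑ k ∈ Finset.Icc 1 n, digit θ x k

/-- `L_{n,θ}(x)`, the maximum of the first `n` digits. -/
def Ldig (θ : ℝ) (x : ℝ) (n : ℕ) : ℤ :=
  if h : 1 ≤ n then (Finset.Icc 1 n).sup' (Finset.nonempty_Icc.mpr h) (digit θ x) else 0

/-- The ratio `L_{n,θ}(x)·log n·log log n / (S_{n,θ}(x) − L_{n,θ}(x))`. -/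
def ratioFun (θ : ℝ) (x : ℝ) (n : ℕ) : ℝ :=
  ((Ldig θ x n : ℝ) * Real.log n * Real.log (Real.log n)) /
    ((Sdig θ x n : ℝ) - (Ldig θ x n : ℝ))

/-- The level set `E_θ(α)` of irrationals in `[0,θ]` where the ratio tends to `α`. -/
def Eset (θ α : ℝ) : Set ℝ :=
  {x | x ∈ Set.Icc 0 θ ∧ Irrational x ∧
    Tendsto (fun n => ratioFun θ x n) atTop (nhds α)}

/-- The sparse sequence `n_k = ⌊exp(k^{3/4})⌋`. -/
def sparseSeq (k : ℕ) : ℕ := ⌊Real.exp ((k : ℝ) ^ ((3 : ℝ) / 4))⌋₊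

/-- The technical conditions (A), (B), (C) on the cutoff `N0`, required to hold
for every `k ≥ N0`. -/
def N0Cond (α : ℝ) (m M : ℕ) (N0 : ℕ) : Prop :=
  ∀ k : ℕ, N0 ≤ k →
    (α * m * ((sparseSeq k : ℝ) - 1) /
        (Real.log (sparseSeq k) * Real.log (Real.log (sparseSeq k))) > (M : ℝ) + 1) ∧
    (Real.log (sparseSeq (k + 1)) * Real.log (Real.log (sparseSeq (k + 1))) -
        Real.log (sparseSeq k) * Real.log (Real.log (sparseSeq k)) < α / 2) ∧
    ((sparseSeq (k + 1) : ℝ) - (sparseSeq k : ℝ) <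
        (sparseSeq k : ℝ) / (k : ℝ) ^ ((1 : ℝ) / 8))

/-- `i` is one of the insertion positions `n_k`, `k ≥ N0`. -/
def insertedPos (N0 : ℕ) (i : ℕ) : Prop := ∃ k : ℕ, N0 ≤ k ∧ i = sparseSeq k

/-- The constructed set `E_{M,θ}(α)`: irrationals in `[0,θ]` whose digit at each
insertion position `n_k` (`k ≥ N0`) equals
`⌊α·(Σ_{i=1}^{n_k−1} ℓ_i(x)) / (log n_k · log log n_k)⌋`, and whose digits at all
other positions lie in `[m, M]`. -/
def EMset (θ α : ℝ) (m M N0 : ℕ) : Set ℝ :=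
  {x | x ∈ Set.Icc 0 θ ∧ Irrational x ∧
    (∀ k : ℕ, N0 ≤ k →
      digit θ x (sparseSeq k) =
        ⌊α * (∑ i ∈ Finset.Icc 1 (sparseSeq k - 1), (digit θ x i : ℝ)) /
          (Real.log (sparseSeq k) * Real.log (Real.log (sparseSeq k)))⌋) ∧
    (∀ i : ℕ, 1 ≤ i → ¬ insertedPos N0 i →
      (m : ℤ) ≤ digit θ x i ∧ digit θ x i ≤ (M : ℤ))}

lemma sparse_one_le (k : ℕ) : 1 ≤ sparseSeq k := by
  apply Nat.le_floor
  simpa using Real.one_le_exp (Real.rpow_nonneg (Nat.cast_nonneg k) _)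

lemma sparse_mono : Monotone sparseSeq := by
  intro a b hab
  apply Nat.floor_mono
  apply Real.exp_le_exp.mpr
  exact Real.rpow_le_rpow (Nat.cast_nonneg a) (by exact_mod_cast hab) (by norm_num)

lemma key_ineq (α Sk Sk1 Dk Dk1 a : ℝ) (hα : 0 < α) (hDk : 0 < Dk) (hDk1 : 0 < Dk1)
    (hS0 : 0 ≤ Sk) (hB : Dk1 - Dk < α / 2) (h2D : 2 * Dk < α * Sk)
    (haD : α * Sk < (a + 1) * Dk) (hgap : Sk + a ≤ Sk1) :
    α * Sk / Dk ≤ α * Sk1 / Dk1 := by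
  rw [div_le_div_iff₀ hDk hDk1]
  have e1 : Sk * (Dk1 - Dk) ≤ Sk * (α / 2) := mul_le_mul_of_nonneg_left hB.le hS0
  have e2 : α / 2 * Sk ≤ a * Dk := by nlinarith
  have e4 : Sk * Dk + a * Dk ≤ Sk1 * Dk := by nlinarith [mul_le_mul_of_nonneg_right hgap hDk.le]
  have e5 : Sk * Dk1 ≤ Sk1 * Dk := by nlinarith
  nlinarith [mul_le_mul_of_nonneg_left e5 hα.le]


/-- for `x ∈ E_{M,θ}(α)` the inserted digits are monotone:
`ℓ_{n_{k+1}}(x) ≥ ℓ_{n_k}(x)` for all `k ≥ N0`; consequently, for all sufficiently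
large `k` and all `n` with `n_k ≤ n < n_{k+1}`, `L_{n,θ}(x) = ℓ_{n_k}(x)`. -/
theorem inserted_digits_monotone (θ : ℝ) (m : ℕ) (hm : 0 < m) (hmns : ¬ IsSquare m)
    (hθ : θ ∈ Set.Ioo (0 : ℝ) 1) (hθirr : Irrational θ) (hθ2 : θ ^ 2 = 1 / m)
    (α : ℝ) (hα : 0 < α) (M : ℕ) (hM : 2 * m + 1 < M)
    (N0 : ℕ) (hN0 : N0Cond α m M N0)
    (x : ℝ) (hx : x ∈ EMset θ α m M N0) :
    (∀ k : ℕ, N0 ≤ k → digit θ x (sparseSeq k) ≤ digit θ x (sparseSeq (k + 1))) ∧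
    (∃ K : ℕ, N0 ≤ K ∧ ∀ k : ℕ, K ≤ k → ∀ n : ℕ,
      sparseSeq k ≤ n → n < sparseSeq (k + 1) →
        Ldig θ x n = digit θ x (sparseSeq k)) := by
  obtain ⟨hxmem, hxirr, hins, hnon⟩ := hx
  set D : ℕ → ℝ := fun k => Real.log (sparseSeq k) * Real.log (Real.log (sparseSeq k)) with hD
  set S : ℕ → ℝ := fun k => ∑ i ∈ Finset.Icc 1 (sparseSeq k - 1), (digit θ x i : ℝ) with hS
  have hins' : ∀ k : ℕ, N0 ≤ k → digit θ x (sparseSeq k) = ⌊α * S k / D k⌋ := hins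
  have hA' : ∀ k : ℕ, N0 ≤ k →
      α * m * ((sparseSeq k : ℝ) - 1) / D k > (M : ℝ) + 1 := fun k hk => (hN0 k hk).1
  have hB' : ∀ k : ℕ, N0 ≤ k → D (k + 1) - D k < α / 2 := fun k hk => (hN0 k hk).2.1
  clear hins hN0
  -- basic consequences of condition (A)
  have hDpos : ∀ j : ℕ, N0 ≤ j → 0 < D j ∧ 2 ≤ sparseSeq j := by
    intro j hj
    have hA := hA' j hj
    have hM1 : (0:ℝ) < (M:ℝ) + 1 := by positivity
    have hn1 : (1:ℝ) ≤ (sparseSeq j : ℝ) := by exact_mod_cast sparse_one_le j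
    have hnum : 0 ≤ α * m * ((sparseSeq j : ℝ) - 1) := by
      apply mul_nonneg (by positivity); linarith
    have hDj : 0 < D j := by
      by_contra h
      have : α * m * ((sparseSeq j : ℝ) - 1) / D j ≤ 0 :=
        div_nonpos_iff.mpr (Or.inl ⟨hnum, le_of_not_gt h⟩)
      linarith
    refine ⟨hDj, ?_⟩
    have hn2 : (1:ℝ) < (sparseSeq j : ℝ) := by
      by_contra h
      have hle : α * m * ((sparseSeq j : ℝ) - 1) ≤ 0 := by
        apply mul_nonpos_of_nonneg_of_nonpos (by positivity); linarith [le_of_not_gt h]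
      have : α * m * ((sparseSeq j : ℝ) - 1) / D j ≤ 0 :=
        div_nonpos_iff.mpr (Or.inr ⟨hle, hDj.le⟩)
      linarith
    exact_mod_cast hn2
  -- sum lower bound helper
  have hSsum : ∀ j : ℕ, (∀ i', 1 ≤ i' → i' ≤ sparseSeq j - 1 → (m:ℤ) ≤ digit θ x i') →
      (m:ℝ) * ((sparseSeq j : ℝ) - 1) ≤ S j := by
    intro j hdig
    have hcard : (Finset.Icc 1 (sparseSeq j - 1)).card = sparseSeq j - 1 := by
      rw [Nat.card_Icc]; omega
    have h2 := Finset.card_nsmul_le_sum (Finset.Icc 1 (sparseSeq j - 1))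
      (fun i => (digit θ x i : ℝ)) (m:ℝ)
      (fun i hi => by
        have hi' := Finset.mem_Icc.mp hi
        show (m:ℝ) ≤ (digit θ x i : ℝ)
        exact_mod_cast hdig i hi'.1 hi'.2)
    rw [hcard, nsmul_eq_mul] at h2
    have hcast : ((sparseSeq j - 1 : ℕ) : ℝ) = (sparseSeq j : ℝ) - 1 := by
      have := sparse_one_le j
      push_cast [Nat.cast_sub this]; ring
    rw [hcast] at h2
    show (m:ℝ) * ((sparseSeq j : ℝ) - 1) ≤
      ∑ i ∈ Finset.Icc 1 (sparseSeq j - 1), ((digit θ x i : ℤ) : ℝ)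
    linarith [h2]
  -- core estimate
  have core : ∀ j : ℕ, N0 ≤ j → (∀ i', 1 ≤ i' → i' ≤ sparseSeq j - 1 → (m:ℤ) ≤ digit θ x i') →
      (M:ℝ) + 1 < α * S j / D j := by
    intro j hj hdig
    have hA := hA' j hj
    obtain ⟨hDj, _⟩ := hDpos j hj
    have hsum := hSsum j hdig
    have h1 : α * m * ((sparseSeq j : ℝ) - 1) ≤ α * S j := by nlinarith
    calc (M:ℝ) + 1 < α * m * ((sparseSeq j : ℝ) - 1) / D j := hA
      _ ≤ α * S j / D j := (div_le_div_iff_of_pos_right hDj).mpr h1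
  -- all digits are at least m
  have L1 : ∀ i : ℕ, 1 ≤ i → (m:ℤ) ≤ digit θ x i := by
    intro i
    induction i using Nat.strong_induction_on with
    | _ i IH =>
      intro hi
      by_cases hip : insertedPos N0 i
      · obtain ⟨j, hj, rfl⟩ := hip
        rw [hins' j hj]
        have hc := core j hj (fun i' h1 h2 => IH i'
          (lt_of_le_of_lt h2 (Nat.sub_lt (sparse_one_le j) one_pos)) h1)
        apply Int.le_floor.mpr
        have hmM : (m:ℝ) ≤ (M:ℝ) + 1 := by exact_mod_cast (show m ≤ M + 1 by omega)
        push_cast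
        linarith
      · exact (hnon i hi hip).1
  -- inserted digits are at least M+1
  have L2 : ∀ j : ℕ, N0 ≤ j → (M:ℤ) + 1 ≤ digit θ x (sparseSeq j) := by
    intro j hj
    rw [hins' j hj]
    apply Int.le_floor.mpr
    push_cast
    exact (core j hj (fun i' h1 _ => L1 i' h1)).le
  -- Part 1
  have part1 : ∀ k : ℕ, N0 ≤ k → digit θ x (sparseSeq k) ≤ digit θ x (sparseSeq (k + 1)) := by
    intro k hk
    by_cases heq : sparseSeq (k+1) = sparseSeq k
    · rw [heq]
    · have hlt : sparseSeq k < sparseSeq (k+1) :=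
        lt_of_le_of_ne (sparse_mono (Nat.le_succ k)) (Ne.symm heq)
      obtain ⟨hDk, hnk2⟩ := hDpos k hk
      obtain ⟨hDk1, _⟩ := hDpos (k+1) (le_trans hk (Nat.le_succ k))
      have hB := hB' k hk
      have hA := hA' k hk
      have hn1r : (1:ℝ) ≤ (sparseSeq k : ℝ) := by exact_mod_cast sparse_one_le k
      have hsum := hSsum k (fun i' h1 _ => L1 i' h1)
      have hm0 : (0:ℝ) < (m:ℝ) := by exact_mod_cast hm
      have hS0 : 0 ≤ S k := by nlinarith
      -- 2 * D k < α * S k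
      have h2D : 2 * D k < α * S k := by
        have hA2 : ((M:ℝ) + 1) * D k < α * m * ((sparseSeq k : ℝ) - 1) :=
          (lt_div_iff₀ hDk).mp hA
        have hMge : (4:ℝ) ≤ (M:ℝ) := by exact_mod_cast (show 4 ≤ M by omega)
        nlinarith [mul_le_mul_of_nonneg_left hsum hα.le,
          mul_pos hDk (show (0:ℝ) < (M:ℝ) - 1 by linarith)]
      -- the digit at position n_k, as a real
      set a : ℝ := ((digit θ x (sparseSeq k) : ℤ) : ℝ) with ha
      have haD : α * S k < (a + 1) * D k := by
        have hfl : α * S k / D k - 1 < a := by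
          rw [ha, hins' k hk]
          exact_mod_cast Int.sub_one_lt_floor (α * S k / D k)
        have := (div_lt_iff₀ hDk).mp (show α * S k / D k < a + 1 by linarith)
        linarith
      -- sum splitting: S (k+1) ≥ S k + a
      have hgap : S k + a ≤ S (k+1) := by
        have hsplit : (∑ i ∈ Finset.Ioc 0 (sparseSeq k - 1), (digit θ x i : ℝ)) +
            ∑ i ∈ Finset.Ioc (sparseSeq k - 1) (sparseSeq (k+1) - 1), (digit θ x i : ℝ) =
            ∑ i ∈ Finset.Ioc 0 (sparseSeq (k+1) - 1), (digit θ x i : ℝ) :=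
          Finset.sum_Ioc_consecutive _ (Nat.zero_le _) (by omega)
        have hSk : S k = ∑ i ∈ Finset.Ioc 0 (sparseSeq k - 1), (digit θ x i : ℝ) := by
          rw [hS]; simp only [← Finset.Icc_add_one_left_eq_Ioc, zero_add]
        have hSk1 : S (k+1) = ∑ i ∈ Finset.Ioc 0 (sparseSeq (k+1) - 1), (digit θ x i : ℝ) := by
          rw [hS]; simp only [← Finset.Icc_add_one_left_eq_Ioc, zero_add]
        have hmem : sparseSeq k ∈ Finset.Ioc (sparseSeq k - 1) (sparseSeq (k+1) - 1) := by
          rw [Finset.mem_Ioc]; omega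
        have htail : a ≤ ∑ i ∈ Finset.Ioc (sparseSeq k - 1) (sparseSeq (k+1) - 1),
            (digit θ x i : ℝ) := by
          apply Finset.single_le_sum (f := fun i => (digit θ x i : ℝ)) ?_ hmem
          intro i hi
          have hi' := Finset.mem_Ioc.mp hi
          have h1i : 1 ≤ i := by omega
          have hLi := L1 i h1i
          show (0:ℝ) ≤ (digit θ x i : ℝ)
          have : (0:ℤ) ≤ digit θ x i := le_trans (by positivity) hLi
          exact_mod_cast this
        rw [hSk, hSk1, ← hsplit]
        linarith
      have hdiv : α * S k / D k ≤ α * S (k+1) / D (k+1) :=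
        key_ineq α (S k) (S (k+1)) (D k) (D (k+1)) a hα hDk hDk1 hS0 hB h2D haD hgap
      rw [hins' k hk, hins' (k+1) (le_trans hk (Nat.le_succ k))]
      exact Int.floor_le_floor hdiv
  refine ⟨part1, N0, le_refl N0, ?_⟩
  -- monotone chain of inserted digits
  have mono_a : ∀ j k : ℕ, N0 ≤ j → j ≤ k →
      digit θ x (sparseSeq j) ≤ digit θ x (sparseSeq k) := by
    intro j k hj hjk
    induction k, hjk using Nat.le_induction with
    | base => exact le_refl _
    | succ k hjk IH => exact le_trans IH (part1 k (le_trans hj hjk))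
  intro k hk n hn1 hn2
  have hnk2 := (hDpos k hk).2
  have h1n : 1 ≤ n := le_trans (by omega) hn1
  rw [Ldig, dif_pos h1n]
  apply le_antisymm
  · apply Finset.sup'_le
    intro i hi
    have hi' := Finset.mem_Icc.mp hi
    by_cases hip : insertedPos N0 i
    · obtain ⟨j, hj, rfl⟩ := hip
      have hjk : j ≤ k := by
        by_contra h
        have hkj : k + 1 ≤ j := by omega
        have := sparse_mono hkj
        omega
      exact mono_a j k hj hjk
    · have h1 := (hnon i hi'.1 hip).2
      have h2 := L2 k hk
      linarith
  · apply Finset.le_sup' (digit θ x)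
    rw [Finset.mem_Icc]
    exact ⟨by omega, hn1⟩
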